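/- The closed unit ball of an infinite-dimensional uniformly convex Banach space X is approximatively compact with respect to the norm, but is not compact. -/

import Mathlib

open Filter Topology Metric

/-- The closed unit ball of an infinite-dimensional uniformly convex Banach space is
approximatively compact with respect to the norm, but not compact. -/
theorem stmt16 {X : Type*} [NormedAddCommGroup X] [NormedSpace ℝ X]
    [UniformConvexSpace X] [CompleteSpace X]
    (hinf : ¬ FiniteDimensional ℝ X) :
    (∀ v : X, ∀ u : ℕ → X, (∀ n, u n ∈ closedBall (0:X) 1) →
      Tendsto (fun n => ‖v - u n‖) atTop
        (𝓝 (⨅ w : closedBall (0:X) 1, ‖v - (w : X)‖)) →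
      ∃ φ : ℕ → ℕ, StrictMono φ ∧
        ∃ l ∈ closedBall (0:X) 1, Tendsto (u ∘ φ) atTop (𝓝 l)) ∧
    ¬ IsCompact (closedBall (0:X) 1) := by
  constructor
  · intro v u hu htend
    set d : ℝ := ⨅ w : closedBall (0:X) 1, ‖v - (w : X)‖ with hd
    have hbdd : BddBelow (Set.range fun w : closedBall (0:X) 1 => ‖v - (w : X)‖) := by
      refine ⟨0, ?_⟩
      rintro x ⟨w, rfl⟩
      positivity
    haveI : Nonempty (closedBall (0:X) 1) := ⟨⟨0, mem_closedBall_self zero_le_one⟩⟩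
    have hdle : ∀ n, d ≤ ‖v - u n‖ := fun n =>
      ciInf_le hbdd (⟨u n, hu n⟩ : closedBall (0:X) 1)
    have hd0 : 0 ≤ d := le_ciInf fun w => norm_nonneg _
    -- the sequence is Cauchy
    have hcauchy : CauchySeq u := by
      rcases eq_or_lt_of_le hd0 with hd0' | hd0'
      · -- d = 0 : u n → v
        have : Tendsto (fun n => ‖u n - v‖) atTop (𝓝 0) := by
          simpa [← hd0', norm_sub_rev] using htend
        exact (tendsto_iff_norm_sub_tendsto_zero.2 this).cauchySeq
      · rw [Metric.cauchySeq_iff]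
        intro ε hε
        obtain ⟨δ, hδ, hconv⟩ :=
          exists_forall_closed_ball_dist_add_le_two_sub X (ε := ε / (d + 1))
            (div_pos hε (by linarith))
        set η : ℝ := min 1 (δ * d / 4) with hη
        have hη0 : 0 < η := lt_min one_pos (by positivity)
        have hη1 : η ≤ 1 := min_le_left _ _
        have hη2 : η ≤ δ * d / 4 := min_le_right _ _
        have hev : ∀ᶠ n in atTop, ‖v - u n‖ < d + η :=
          htend.eventually (eventually_lt_nhds (by linarith)) |>.mono fun n h => h
        obtain ⟨N, hN⟩ := hev.exists_forall_of_atTop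
        refine ⟨N, fun m hm n hn => ?_⟩
        by_contra hcon
        push_neg at hcon
        rw [dist_eq_norm] at hcon
        have hdη : (0:ℝ) < d + η := by linarith
        set x : X := (d + η)⁻¹ • (v - u m)
        set y : X := (d + η)⁻¹ • (v - u n)
        have hxn : ‖x‖ ≤ 1 := by
          rw [norm_smul, Real.norm_eq_abs, abs_of_pos (inv_pos.2 hdη)]
          rw [inv_mul_le_iff₀ hdη, mul_one]
          exact (hN m hm).le
        have hyn : ‖y‖ ≤ 1 := by
          rw [norm_smul, Real.norm_eq_abs, abs_of_pos (inv_pos.2 hdη)]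
          rw [inv_mul_le_iff₀ hdη, mul_one]
          exact (hN n hn).le
        have hxy : ε / (d + 1) ≤ ‖x - y‖ := by
          have : x - y = (d + η)⁻¹ • (u n - u m) := by
            simp only [x, y, ← smul_sub]
            congr 1
            abel
          rw [this, norm_smul, Real.norm_eq_abs, abs_of_pos (inv_pos.2 hdη),
            mul_comm, div_eq_mul_inv]
          have h1 : ε ≤ ‖u n - u m‖ := hcon.trans_eq (norm_sub_rev _ _)
          have h2 : (d + 1)⁻¹ ≤ (d + η)⁻¹ := by
            apply inv_anti₀ hdη
            linarith
          calc ε * (d + 1)⁻¹ ≤ ‖u n - u m‖ * (d + η)⁻¹ := by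
                apply mul_le_mul h1 h2 (by positivity) (norm_nonneg _)
            _ = _ := rfl
        have hsum := hconv hxn hyn hxy
        -- ‖x + y‖ ≤ 2 - δ, i.e. ‖2v - u m - u n‖ ≤ (2-δ)(d+η)
        have hmid : (2:ℝ) * d ≤ ‖(v - u m) + (v - u n)‖ := by
          have hwmem : (1/2 : ℝ) • (u m + u n) ∈ closedBall (0:X) 1 := by
            have := convex_closedBall (0:X) 1 (hu m) (hu n)
              (by norm_num : (0:ℝ) ≤ 1/2) (by norm_num : (0:ℝ) ≤ 1/2) (by norm_num)
            simpa [smul_add] using this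
          have h1 : d ≤ ‖v - (1/2 : ℝ) • (u m + u n)‖ :=
            ciInf_le hbdd (⟨_, hwmem⟩ : closedBall (0:X) 1)
          have h2 : (v - u m) + (v - u n) = (2:ℝ) • (v - (1/2 : ℝ) • (u m + u n)) := by
            module
          rw [h2, norm_smul]
          simp only [Real.norm_ofNat]
          linarith
        have hxysum : x + y = (d + η)⁻¹ • ((v - u m) + (v - u n)) := by
          simp [x, y, smul_add]
        rw [hxysum, norm_smul, Real.norm_eq_abs, abs_of_pos (inv_pos.2 hdη)] at hsum
        have hδ2 : δ ≤ 2 := by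
          nlinarith [norm_nonneg (x + y), hsum, inv_pos.2 hdη,
            mul_nonneg (inv_pos.2 hdη).le (norm_nonneg ((v - u m) + (v - u n)))]
        have : ‖(v - u m) + (v - u n)‖ ≤ (2 - δ) * (d + η) := by
          rw [inv_mul_le_iff₀ hdη] at hsum
          linarith [hsum]
        nlinarith [hmid, this, hη2, mul_pos hδ hη0]
    obtain ⟨l, hl⟩ := cauchySeq_tendsto_of_complete hcauchy
    refine ⟨id, strictMono_id, l, ?_, hl⟩
    exact isClosed_closedBall.mem_of_tendsto hl (Eventually.of_forall hu)
  · intro hcomp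
    exact hinf (FiniteDimensional.of_isCompact_closedBall ℝ one_pos hcomp)
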